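/- Let R* and R̂ be probability measures on X × Y with the same marginals on X and on Y, and let W be a third probability measure on X × Y with all measures mutually absolutely continuous. If log(dW/dR̂)(x,y) = f(x) + g(y) for functions f, g integrable with respect to the common marginals, then KL(R*‖R̂) − KL(R*‖W) = E_{R̂}[log(dW/dR*)] − KL(R̂‖R*) ≤ E_{R̂}[log(dW/dR*)]. -/

import Mathlib

open MeasureTheory

/-- The Kullback–Leibler divergence `KL(P‖Q) = ∫ log (dP/dQ) dP`. -/
noncomputable def KL {Ω : Type*} [MeasurableSpace Ω] (P Q : Measure Ω) : ℝ :=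
  ∫ ω, Real.log (P.rnDeriv Q ω).toReal ∂P

/-- Additivity of log densities along a chain, a.e. with respect to a measure `ρ` that is
absolutely continuous with respect to all three. -/
lemma log_rnDeriv_chain {Ω : Type*} [MeasurableSpace Ω] (μ ν κ ρ : Measure Ω)
    [SigmaFinite μ] [SigmaFinite ν] [SigmaFinite κ]
    (hμν : μ ≪ ν) (hνμ : ν ≪ μ) (hμκ : μ ≪ κ) (hκμ : κ ≪ μ)
    (hρν : ρ ≪ ν) (hρκ : ρ ≪ κ) :
    ∀ᵐ x ∂ρ, Real.log (μ.rnDeriv κ x).toReal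
      = Real.log (μ.rnDeriv ν x).toReal + Real.log (ν.rnDeriv κ x).toReal := by
  have hchain := hρκ.ae_le (Measure.rnDeriv_mul_rnDeriv (κ := κ) hμν)
  have hpos1 : ∀ᵐ x ∂ρ, 0 < μ.rnDeriv ν x :=
    hρν.ae_le ((Measure.rnDeriv_pos' (μ := ν) (ν := μ) hνμ))
  have hpos2 : ∀ᵐ x ∂ρ, 0 < ν.rnDeriv κ x :=
    hρκ.ae_le ((Measure.rnDeriv_pos' (μ := κ) (ν := ν) ((hκμ.trans hμν))))
  have hfin1 : ∀ᵐ x ∂ρ, μ.rnDeriv ν x < ⊤ := hρν.ae_le (Measure.rnDeriv_lt_top μ ν)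
  have hfin2 : ∀ᵐ x ∂ρ, ν.rnDeriv κ x < ⊤ := hρκ.ae_le (Measure.rnDeriv_lt_top ν κ)
  filter_upwards [hchain, hpos1, hpos2, hfin1, hfin2] with x hc h1 h2 hf1 hf2
  rw [← hc, Pi.mul_apply, ENNReal.toReal_mul, Real.log_mul]
  · exact (ENNReal.toReal_pos h1.ne' hf1.ne).ne'
  · exact (ENNReal.toReal_pos h2.ne' hf2.ne).ne'

/-- Gibbs' inequality: nonnegativity of KL. -/
lemma kl_nonneg' {Ω : Type*} [MeasurableSpace Ω] (μ ν : Measure Ω)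
    [IsProbabilityMeasure μ] [IsProbabilityMeasure ν] (hμν : μ ≪ ν) (hνμ : ν ≪ μ)
    (hint : Integrable (fun x => Real.log (μ.rnDeriv ν x).toReal) μ) :
    0 ≤ KL μ ν := by
  have hneg : ∀ᵐ x ∂μ, Real.log (μ.rnDeriv ν x).toReal
      = - Real.log (ν.rnDeriv μ x).toReal := by
    filter_upwards [(MeasureTheory.neg_llr (μ := μ) (ν := ν) hμν)] with x hx
    simp only [Pi.neg_apply, MeasureTheory.llr] at hx
    linarith
  have hint' : Integrable (fun x => Real.log (ν.rnDeriv μ x).toReal) μ := by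
    have := hint.neg
    refine this.congr ?_
    filter_upwards [hneg] with x hx
    simp [hx]
  have hle : ∫ x, Real.log (ν.rnDeriv μ x).toReal ∂μ ≤ 0 := by
    have hmono : ∫ x, Real.log (ν.rnDeriv μ x).toReal ∂μ
        ≤ ∫ x, ((ν.rnDeriv μ x).toReal - 1) ∂μ := by
      refine integral_mono_ae hint' ((Measure.integrable_toReal_rnDeriv).sub
        (integrable_const 1)) ?_
      have hpos : ∀ᵐ x ∂μ, 0 < ν.rnDeriv μ x := Measure.rnDeriv_pos' (μ := μ) (ν := ν) hμν
      have hfin : ∀ᵐ x ∂μ, ν.rnDeriv μ x < ⊤ := Measure.rnDeriv_lt_top ν μ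
      filter_upwards [hpos, hfin] with x h1 h2
      exact Real.log_le_sub_one_of_pos (ENNReal.toReal_pos h1.ne' h2.ne)
    have : ∫ x, ((ν.rnDeriv μ x).toReal - 1) ∂μ = 0 := by
      rw [integral_sub (Measure.integrable_toReal_rnDeriv) (integrable_const 1),
        Measure.integral_toReal_rnDeriv hνμ]
      simp
    linarith
  have : KL μ ν = - ∫ x, Real.log (ν.rnDeriv μ x).toReal ∂μ := by
    rw [KL, ← integral_neg]
    exact integral_congr_ae (by filter_upwards [hneg] with x hx; simp [hx])
  linarith

/-- Let `R*`, `R̂` be probability measures on `X × Y` with identical marginals, `W` a third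
measure, all mutually absolutely continuous with integrable log-densities. If
`log (dW/dR̂)(x,y) = f(x) + g(y)` for integrable `f`, `g`, then
`KL(R*‖R̂) − KL(R*‖W) = E_{R̂}[log (dW/dR*)] − KL(R̂‖R*) ≤ E_{R̂}[log (dW/dR*)]`. -/
theorem kl_diff_eq_and_le {X Y : Type*} [MeasurableSpace X] [MeasurableSpace Y]
    (Rs Rh W : Measure (X × Y)) [IsProbabilityMeasure Rs] [IsProbabilityMeasure Rh]
    [IsProbabilityMeasure W]
    (hX : Rs.map Prod.fst = Rh.map Prod.fst) (hY : Rs.map Prod.snd = Rh.map Prod.snd)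
    (h1 : Rs ≪ Rh) (h2 : Rh ≪ Rs) (h3 : Rs ≪ W) (h4 : W ≪ Rs) (h5 : Rh ≪ W) (h6 : W ≪ Rh)
    (f : X → ℝ) (g : Y → ℝ) (hf : Measurable f) (hg : Measurable g)
    (hfi : Integrable f (Rs.map Prod.fst)) (hgi : Integrable g (Rs.map Prod.snd))
    (heq : ∀ᵐ z ∂ Rh, Real.log (W.rnDeriv Rh z).toReal = f z.1 + g z.2)
    (hiA : Integrable (fun z => Real.log (Rs.rnDeriv Rh z).toReal) Rs)
    (hiB : Integrable (fun z => Real.log (Rs.rnDeriv W z).toReal) Rs)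
    (hiC : Integrable (fun z => Real.log (W.rnDeriv Rs z).toReal) Rh)
    (hiD : Integrable (fun z => Real.log (Rh.rnDeriv Rs z).toReal) Rh) :
    KL Rs Rh - KL Rs W
        = (∫ z, Real.log (W.rnDeriv Rs z).toReal ∂ Rh) - KL Rh Rs ∧
      KL Rs Rh - KL Rs W ≤ ∫ z, Real.log (W.rnDeriv Rs z).toReal ∂ Rh := by
  -- Step 1: log (dRs/dRh) = log (dRs/dW) + log (dW/dRh) a.e. Rs
  have chain1 := log_rnDeriv_chain Rs W Rh Rs h3 h4 h1 h2 h3 h1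
  -- Step 2: log (dW/dRs) = log (dW/dRh) + log (dRh/dRs) a.e. Rh
  have chain2 := log_rnDeriv_chain W Rh Rs Rh h6 h5 h4 h3 Measure.AbsolutelyContinuous.rfl h2
  have heqRs : ∀ᵐ z ∂ Rs, Real.log (W.rnDeriv Rh z).toReal = f z.1 + g z.2 := h1.ae_le heq
  -- integrability of f∘fst + g∘snd under Rs and Rh
  have hfiRs : Integrable (fun z : X × Y => f z.1) Rs :=
    (integrable_map_measure hf.aestronglyMeasurable measurable_fst.aemeasurable).mp hfi
  have hgiRs : Integrable (fun z : X × Y => g z.2) Rs :=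
    (integrable_map_measure hg.aestronglyMeasurable measurable_snd.aemeasurable).mp hgi
  have hfiRh : Integrable (fun z : X × Y => f z.1) Rh :=
    (integrable_map_measure hf.aestronglyMeasurable measurable_fst.aemeasurable).mp (hX ▸ hfi)
  have hgiRh : Integrable (fun z : X × Y => g z.2) Rh :=
    (integrable_map_measure hg.aestronglyMeasurable measurable_snd.aemeasurable).mp (hY ▸ hgi)
  -- KL Rs Rh - KL Rs W = ∫ log (dW/dRh) dRs
  have step1 : KL Rs Rh - KL Rs W = ∫ z, Real.log (W.rnDeriv Rh z).toReal ∂ Rs := by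
    rw [KL, KL, ← integral_sub hiA hiB]
    refine integral_congr_ae ?_
    filter_upwards [chain1] with z hz
    rw [hz]; ring
  -- ∫ log (dW/dRh) dRs = ∫ log (dW/dRh) dRh  (via f + g and equal marginals)
  have step2 : ∫ z, Real.log (W.rnDeriv Rh z).toReal ∂ Rs
      = ∫ z, Real.log (W.rnDeriv Rh z).toReal ∂ Rh := by
    rw [integral_congr_ae heqRs, integral_congr_ae heq,
      integral_add hfiRs hgiRs, integral_add hfiRh hgiRh]
    congr 1
    · rw [← integral_map measurable_fst.aemeasurable hf.aestronglyMeasurable,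
        ← integral_map measurable_fst.aemeasurable hf.aestronglyMeasurable, hX]
    · rw [← integral_map measurable_snd.aemeasurable hg.aestronglyMeasurable,
        ← integral_map measurable_snd.aemeasurable hg.aestronglyMeasurable, hY]
  -- ∫ log (dW/dRh) dRh = ∫ log (dW/dRs) dRh - KL Rh Rs
  have step3 : ∫ z, Real.log (W.rnDeriv Rh z).toReal ∂ Rh
      = (∫ z, Real.log (W.rnDeriv Rs z).toReal ∂ Rh) - KL Rh Rs := by
    rw [KL, ← integral_sub hiC hiD]
    refine integral_congr_ae ?_
    filter_upwards [chain2] with z hz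
    rw [hz]; ring
  have main : KL Rs Rh - KL Rs W
      = (∫ z, Real.log (W.rnDeriv Rs z).toReal ∂ Rh) - KL Rh Rs := by
    rw [step1, step2, step3]
  refine ⟨main, ?_⟩
  have hnn : 0 ≤ KL Rh Rs := kl_nonneg' Rh Rs h2 h1 hiD
  linarith
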